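/- arXiv:2508.16567 — 8 statements merged into one kernel-verified Lean document; each statement's English description precedes it below -/
import Mathlib

section
/- Let v, b : ℝ × ℝ → ℝ, let P : ℝ × ℝ × ℝ → ℝ be differentiable and satisfy the continuum covariance equation ∂_t P + v(x₁,t) ∂_{x₁} P + v(x₂,t) ∂_{x₂} P + (b(x₁,t) + b(x₂,t)) P = 0, and let σ : ℝ × ℝ → ℝ be differentiable with σ(x,t) > 0 for all (x,t) and satisfying ∂_t σ + v(x,t) ∂_x σ + b(x,t) σ = 0. Then the correlation C(x₁,x₂,t) := P(x₁,x₂,t) / (σ(x₁,t) σ(x₂,t)) satisfies the correlation equation ∂_t C + v(x₁,t) ∂_{x₁} C + v(x₂,t) ∂_{x₂} C = 0 for all (x₁,x₂,t). -/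
/-- If `P` satisfies the continuum covariance equation and the positive
standard-deviation field `σ` satisfies `∂_t σ + v ∂_x σ + b σ = 0`, then the
correlation `C(x₁,x₂,t) := P(x₁,x₂,t)/(σ(x₁,t) σ(x₂,t))` satisfies the
correlation equation `∂_t C + v(x₁,t) ∂_{x₁} C + v(x₂,t) ∂_{x₂} C = 0`. -/
theorem correlation_equation_of_covariance_equation
    (v b : ℝ × ℝ → ℝ) (P : ℝ × ℝ × ℝ → ℝ) (σ : ℝ × ℝ → ℝ)
    (hP : Differentiable ℝ P)
    (hppde : ∀ x₁ x₂ t,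
      deriv (fun τ => P (x₁, x₂, τ)) t
        + v (x₁, t) * deriv (fun y => P (y, x₂, t)) x₁
        + v (x₂, t) * deriv (fun y => P (x₁, y, t)) x₂
        + (b (x₁, t) + b (x₂, t)) * P (x₁, x₂, t) = 0)
    (hσ : Differentiable ℝ σ)
    (hσpos : ∀ x t, 0 < σ (x, t))
    (hσpde : ∀ x t,
      deriv (fun τ => σ (x, τ)) t + v (x, t) * deriv (fun y => σ (y, t)) x
        + b (x, t) * σ (x, t) = 0) :
    ∀ x₁ x₂ t,
      deriv (fun τ => P (x₁, x₂, τ) / (σ (x₁, τ) * σ (x₂, τ))) t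
        + v (x₁, t) * deriv (fun y => P (y, x₂, t) / (σ (y, t) * σ (x₂, t))) x₁
        + v (x₂, t) * deriv (fun y => P (x₁, y, t) / (σ (x₁, t) * σ (y, t))) x₂ = 0 := by
  intro x₁ x₂ t
  have hPt : DifferentiableAt ℝ (fun τ => P (x₁, x₂, τ)) t :=
    (hP _).comp t (by fun_prop)
  have hPx1 : DifferentiableAt ℝ (fun y => P (y, x₂, t)) x₁ :=
    (hP _).comp x₁ (by fun_prop)
  have hPx2 : DifferentiableAt ℝ (fun y => P (x₁, y, t)) x₂ :=
    (hP _).comp x₂ (by fun_prop)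
  have hσ1t : DifferentiableAt ℝ (fun τ => σ (x₁, τ)) t :=
    (hσ _).comp t (by fun_prop)
  have hσ2t : DifferentiableAt ℝ (fun τ => σ (x₂, τ)) t :=
    (hσ _).comp t (by fun_prop)
  have hσ1x : DifferentiableAt ℝ (fun y => σ (y, t)) x₁ :=
    (hσ _).comp x₁ (by fun_prop)
  have hσ2x : DifferentiableAt ℝ (fun y => σ (y, t)) x₂ :=
    (hσ _).comp x₂ (by fun_prop)
  have hs1 : σ (x₁, t) ≠ 0 := (hσpos x₁ t).ne'
  have hs2 : σ (x₂, t) ≠ 0 := (hσpos x₂ t).ne'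
  have hd1 : deriv (fun τ => P (x₁, x₂, τ) / (σ (x₁, τ) * σ (x₂, τ))) t
      = (deriv (fun τ => P (x₁, x₂, τ)) t * (σ (x₁, t) * σ (x₂, t))
          - P (x₁, x₂, t) * (deriv (fun τ => σ (x₁, τ)) t * σ (x₂, t)
            + σ (x₁, t) * deriv (fun τ => σ (x₂, τ)) t))
        / (σ (x₁, t) * σ (x₂, t)) ^ 2 := by
    rw [deriv_fun_div hPt (hσ1t.fun_mul hσ2t) (mul_ne_zero hs1 hs2), deriv_fun_mul hσ1t hσ2t]
  have hd2 : deriv (fun y => P (y, x₂, t) / (σ (y, t) * σ (x₂, t))) x₁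
      = (deriv (fun y => P (y, x₂, t)) x₁ * (σ (x₁, t) * σ (x₂, t))
          - P (x₁, x₂, t) * (deriv (fun y => σ (y, t)) x₁ * σ (x₂, t)))
        / (σ (x₁, t) * σ (x₂, t)) ^ 2 := by
    rw [deriv_fun_div hPx1 (hσ1x.fun_mul (differentiableAt_const _)) (mul_ne_zero hs1 hs2),
      deriv_fun_mul hσ1x (differentiableAt_const _)]
    simp
  have hd3 : deriv (fun y => P (x₁, y, t) / (σ (x₁, t) * σ (y, t))) x₂
      = (deriv (fun y => P (x₁, y, t)) x₂ * (σ (x₁, t) * σ (x₂, t))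
          - P (x₁, x₂, t) * (σ (x₁, t) * deriv (fun y => σ (y, t)) x₂))
        / (σ (x₁, t) * σ (x₂, t)) ^ 2 := by
    rw [deriv_fun_div hPx2 ((differentiableAt_const _).fun_mul hσ2x) (mul_ne_zero hs1 hs2),
      deriv_fun_mul (differentiableAt_const _) hσ2x]
    simp
  rw [hd1, hd2, hd3]
  have h1 := hppde x₁ x₂ t
  have h2 := hσpde x₁ t
  have h3 := hσpde x₂ t
  field_simp
  linear_combination (σ (x₁, t) * σ (x₂, t)) * h1
    - σ (x₂, t) * P (x₁, x₂, t) * h2 - σ (x₁, t) * P (x₁, x₂, t) * h3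
end

section
/- Let v : ℝ × ℝ → ℝ be twice continuously differentiable in x, and let C : ℝ × ℝ × ℝ → ℝ be three times continuously differentiable, satisfy C(x,x,t) = 1 for all x and t, and satisfy the correlation equation ∂_t C + v(x₁,t) ∂_{x₁} C + v(x₂,t) ∂_{x₂} C = 0. Define C₂(x,t) := [∂²_{x₁} C − 2 ∂_{x₁}∂_{x₂} C + ∂²_{x₂} C](x₁,x₂,t) evaluated at x₁ = x₂ = x. Then C₂ satisfies the transport equation ∂_t C₂ + v(x,t) ∂_x C₂ + 2 v_x(x,t) C₂ = 0 for all (x,t). -/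
/-! Auxiliary directional-derivative machinery. -/

/-- Directional derivative of `f : ℝ³ → ℝ` in direction `u`. -/
noncomputable def Dv (u : ℝ × ℝ × ℝ) (f : ℝ × ℝ × ℝ → ℝ) (p : ℝ × ℝ × ℝ) : ℝ :=
  fderiv ℝ f p u

lemma Dv_contDiff2 {f : ℝ × ℝ × ℝ → ℝ} (hf : ContDiff ℝ 3 f) (u : ℝ × ℝ × ℝ) :
    ContDiff ℝ 2 (Dv u f) :=
  (hf.fderiv_right (m := 2) (by norm_num)).clm_apply contDiff_const

lemma Dv_contDiff1 {f : ℝ × ℝ × ℝ → ℝ} (hf : ContDiff ℝ 2 f) (u : ℝ × ℝ × ℝ) :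
    ContDiff ℝ 1 (Dv u f) :=
  (hf.fderiv_right (m := 1) (by norm_num)).clm_apply contDiff_const

lemma hasDerivAt_slice1 {f : ℝ × ℝ × ℝ → ℝ} {a b c : ℝ}
    (hf : DifferentiableAt ℝ f (a, b, c)) :
    HasDerivAt (fun y => f (y, b, c)) (Dv (1,0,0) f (a,b,c)) a := by
  have hL : HasDerivAt (fun y : ℝ => ((y, b, c) : ℝ × ℝ × ℝ)) ((1:ℝ),(0:ℝ),(0:ℝ)) a :=
    HasDerivAt.prodMk (hasDerivAt_id a) (HasDerivAt.prodMk (hasDerivAt_const a b) (hasDerivAt_const a c))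
  exact hf.hasFDerivAt.comp_hasDerivAt a hL

lemma hasDerivAt_slice2 {f : ℝ × ℝ × ℝ → ℝ} {a b c : ℝ}
    (hf : DifferentiableAt ℝ f (a, b, c)) :
    HasDerivAt (fun y => f (a, y, c)) (Dv (0,1,0) f (a,b,c)) b := by
  have hL : HasDerivAt (fun y : ℝ => ((a, y, c) : ℝ × ℝ × ℝ)) ((0:ℝ),(1:ℝ),(0:ℝ)) b :=
    HasDerivAt.prodMk (hasDerivAt_const b a) (HasDerivAt.prodMk (hasDerivAt_id b) (hasDerivAt_const b c))
  exact hf.hasFDerivAt.comp_hasDerivAt b hL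

lemma hasDerivAt_slice3 {f : ℝ × ℝ × ℝ → ℝ} {a b c : ℝ}
    (hf : DifferentiableAt ℝ f (a, b, c)) :
    HasDerivAt (fun τ => f (a, b, τ)) (Dv (0,0,1) f (a,b,c)) c := by
  have hL : HasDerivAt (fun τ : ℝ => ((a, b, τ) : ℝ × ℝ × ℝ)) ((0:ℝ),(0:ℝ),(1:ℝ)) c :=
    HasDerivAt.prodMk (hasDerivAt_const c a) (HasDerivAt.prodMk (hasDerivAt_const c b) (hasDerivAt_id c))
  exact hf.hasFDerivAt.comp_hasDerivAt c hL

lemma hasDerivAt_diag {f : ℝ × ℝ × ℝ → ℝ} {a c : ℝ}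
    (hf : DifferentiableAt ℝ f (a, a, c)) :
    HasDerivAt (fun y => f (y, y, c)) (Dv (1,0,0) f (a,a,c) + Dv (0,1,0) f (a,a,c)) a := by
  have hL : HasDerivAt (fun y : ℝ => ((y, y, c) : ℝ × ℝ × ℝ)) ((1:ℝ),(1:ℝ),(0:ℝ)) a :=
    HasDerivAt.prodMk (hasDerivAt_id a) (HasDerivAt.prodMk (hasDerivAt_id a) (hasDerivAt_const a c))
  have h := hf.hasFDerivAt.comp_hasDerivAt a hL
  have he : ((1:ℝ),(1:ℝ),(0:ℝ)) = ((1:ℝ),(0:ℝ),(0:ℝ)) + ((0:ℝ),(1:ℝ),(0:ℝ)) := by norm_num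
  rw [he, map_add] at h
  exact h

/-- Clairaut symmetry for `Dv`. -/
lemma Dv_swap {f : ℝ × ℝ × ℝ → ℝ} (hf : ContDiff ℝ 2 f) (u w p : ℝ × ℝ × ℝ) :
    Dv w (Dv u f) p = Dv u (Dv w f) p := by
  have hf1 : Differentiable ℝ f := hf.differentiable two_ne_zero
  have hd : DifferentiableAt ℝ (fderiv ℝ f) p :=
    (hf.fderiv_right (m := 1) le_rfl).differentiable one_ne_zero |>.differentiableAt
  have key : ∀ z : ℝ × ℝ × ℝ,
      fderiv ℝ (fun q => fderiv ℝ f q z) p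
        = (ContinuousLinearMap.apply ℝ ℝ z).comp (fderiv ℝ (fderiv ℝ f) p) := by
    intro z
    exact ((ContinuousLinearMap.apply ℝ ℝ z).hasFDerivAt.comp p hd.hasFDerivAt).fderiv
  have hsymm := second_derivative_symmetric (f := f) (f' := fderiv ℝ f)
    (f'' := fderiv ℝ (fderiv ℝ f) p) (x := p)
    (fun y => (hf1 y).hasFDerivAt) hd.hasFDerivAt u w
  show fderiv ℝ (fun q => fderiv ℝ f q u) p w = fderiv ℝ (fun q => fderiv ℝ f q w) p u
  rw [key u, key w]
  simpa using hsymm.symm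

lemma Dv_swap_fun {f : ℝ × ℝ × ℝ → ℝ} (hf : ContDiff ℝ 2 f) (u w : ℝ × ℝ × ℝ) :
    Dv w (Dv u f) = Dv u (Dv w f) :=
  funext fun p => Dv_swap hf u w p

/-- The diagonal second-difference quantity
`C₂(x,t) = [∂²_{x₁} C − 2 ∂_{x₁}∂_{x₂} C + ∂²_{x₂} C](x₁,x₂,t)` at `x₁ = x₂ = x`. -/
noncomputable def C2diag (C : ℝ × ℝ × ℝ → ℝ) (x t : ℝ) : ℝ :=
  deriv (deriv (fun z => C (z, x, t))) x
    - 2 * deriv (fun y₁ => deriv (fun y₂ => C (y₁, y₂, t)) x) x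
    + deriv (deriv (fun z => C (x, z, t))) x

/-- If `C` is a `C³` correlation function with unit diagonal satisfying the
correlation equation `∂_t C + v(x₁,t) ∂_{x₁} C + v(x₂,t) ∂_{x₂} C = 0`, then `C₂`
satisfies the transport equation `∂_t C₂ + v ∂_x C₂ + 2 v_x C₂ = 0`. -/
theorem C2_transport_equation
    (v : ℝ × ℝ → ℝ) (C : ℝ × ℝ × ℝ → ℝ)
    (hv : ∀ t, ContDiff ℝ 2 (fun x => v (x, t)))
    (hC : ContDiff ℝ 3 C)
    (hdiag : ∀ x t, C (x, x, t) = 1)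
    (hpde : ∀ x₁ x₂ t,
      deriv (fun τ => C (x₁, x₂, τ)) t
        + v (x₁, t) * deriv (fun y => C (y, x₂, t)) x₁
        + v (x₂, t) * deriv (fun y => C (x₁, y, t)) x₂ = 0) :
    ∀ x t,
      deriv (fun τ => C2diag C x τ) t
        + v (x, t) * deriv (fun y => C2diag C y t) x
        + 2 * deriv (fun y => v (y, t)) x * C2diag C x t = 0 := by
  intro x t
  set u1 : ℝ × ℝ × ℝ := (1,0,0) with hu1
  set u2 : ℝ × ℝ × ℝ := (0,1,0) with hu2
  set u3 : ℝ × ℝ × ℝ := (0,0,1) with hu3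
  -- regularity
  have hC2 : ContDiff ℝ 2 C := hC.of_le (by norm_num)
  have hCd : Differentiable ℝ C := hC2.differentiable two_ne_zero
  have hD1 : ContDiff ℝ 2 (Dv u1 C) := Dv_contDiff2 hC u1
  have hD2 : ContDiff ℝ 2 (Dv u2 C) := Dv_contDiff2 hC u2
  have hD3 : ContDiff ℝ 2 (Dv u3 C) := Dv_contDiff2 hC u3
  have hD1d : Differentiable ℝ (Dv u1 C) := hD1.differentiable two_ne_zero
  have hD2d : Differentiable ℝ (Dv u2 C) := hD2.differentiable two_ne_zero
  have hD3d : Differentiable ℝ (Dv u3 C) := hD3.differentiable two_ne_zero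
  have hDDd : ∀ i j : ℝ × ℝ × ℝ, ContDiff ℝ 2 (Dv j C) → Differentiable ℝ (Dv i (Dv j C)) :=
    fun i j h => (Dv_contDiff1 h i).differentiable one_ne_zero
  have hD11d := hDDd u1 u1 hD1
  have hD12d := hDDd u1 u2 hD2
  have hD22d := hDDd u2 u2 hD2
  have hD13d := hDDd u1 u3 hD3
  have hD23d := hDDd u2 u3 hD3
  have hD21d := hDDd u2 u1 hD1
  -- derivatives of v
  have hvd : ∀ c : ℝ, Differentiable ℝ (fun y => v (y, c)) :=
    fun c => (hv c).differentiable two_ne_zero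
  have hvd' : ∀ c : ℝ, Differentiable ℝ (deriv (fun y => v (y, c))) := by
    intro c
    have h2 : ContDiff ℝ ((1:WithTop ℕ∞)+1) (fun x => v (x, c)) := by norm_num; exact hv c
    exact (contDiff_succ_iff_deriv.mp h2).2.2.differentiable one_ne_zero
  have hvda : ∀ a c : ℝ, HasDerivAt (fun y => v (y, c)) (deriv (fun y => v (y, c)) a) a :=
    fun a c => ((hvd c) a).hasDerivAt
  have hvda' : ∀ a c : ℝ, HasDerivAt (fun y => deriv (fun z => v (z, c)) y)
      (deriv (fun y => deriv (fun z => v (z, c)) y) a) a :=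
    fun a c => ((hvd' c) a).hasDerivAt
  -- the PDE in Dv form
  have hP : ∀ a b c : ℝ,
      Dv u3 C (a,b,c) + v (a,c) * Dv u1 C (a,b,c) + v (b,c) * Dv u2 C (a,b,c) = 0 := by
    intro a b c
    have h3 := (hasDerivAt_slice3 (f := C) (hCd (a,b,c))).deriv
    have h1 := (hasDerivAt_slice1 (f := C) (hCd (a,b,c))).deriv
    have h2 := (hasDerivAt_slice2 (f := C) (hCd (a,b,c))).deriv
    have := hpde a b c
    rw [h3, h1, h2] at this
    exact this
  -- first derivative of the PDE in x₁
  have hP1 : ∀ a b c : ℝ,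
      Dv u1 (Dv u3 C) (a,b,c)
        + (deriv (fun y => v (y,c)) a * Dv u1 C (a,b,c) + v (a,c) * Dv u1 (Dv u1 C) (a,b,c))
        + v (b,c) * Dv u1 (Dv u2 C) (a,b,c) = 0 := by
    intro a b c
    have hg : (fun y => Dv u3 C (y,b,c) + v (y,c) * Dv u1 C (y,b,c)
        + v (b,c) * Dv u2 C (y,b,c)) = fun _ => (0:ℝ) := funext fun y => hP y b c
    have hd : HasDerivAt (fun y => Dv u3 C (y,b,c) + v (y,c) * Dv u1 C (y,b,c)
        + v (b,c) * Dv u2 C (y,b,c))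
        (Dv u1 (Dv u3 C) (a,b,c)
          + (deriv (fun y => v (y,c)) a * Dv u1 C (a,b,c)
            + v (a,c) * Dv u1 (Dv u1 C) (a,b,c))
          + v (b,c) * Dv u1 (Dv u2 C) (a,b,c)) a :=
      ((hasDerivAt_slice1 (hD3d (a,b,c))).add
        ((hvda a c).mul (hasDerivAt_slice1 (hD1d (a,b,c))))).add
        ((hasDerivAt_slice1 (hD2d (a,b,c))).const_mul (v (b,c)))
    have h0 := hd.deriv
    rw [hg, deriv_const] at h0
    exact h0.symm
  -- first derivative of the PDE in x₂
  have hP2 : ∀ a b c : ℝ,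
      Dv u2 (Dv u3 C) (a,b,c)
        + v (a,c) * Dv u2 (Dv u1 C) (a,b,c)
        + (deriv (fun y => v (y,c)) b * Dv u2 C (a,b,c)
            + v (b,c) * Dv u2 (Dv u2 C) (a,b,c)) = 0 := by
    intro a b c
    have hg : (fun y => Dv u3 C (a,y,c) + v (a,c) * Dv u1 C (a,y,c)
        + v (y,c) * Dv u2 C (a,y,c)) = fun _ => (0:ℝ) := funext fun y => hP a y c
    have hd : HasDerivAt (fun y => Dv u3 C (a,y,c) + v (a,c) * Dv u1 C (a,y,c)
        + v (y,c) * Dv u2 C (a,y,c))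
        (Dv u2 (Dv u3 C) (a,b,c)
          + v (a,c) * Dv u2 (Dv u1 C) (a,b,c)
          + (deriv (fun y => v (y,c)) b * Dv u2 C (a,b,c)
            + v (b,c) * Dv u2 (Dv u2 C) (a,b,c))) b :=
      ((hasDerivAt_slice2 (hD3d (a,b,c))).add
        ((hasDerivAt_slice2 (hD1d (a,b,c))).const_mul (v (a,c)))).add
        ((hvda b c).mul (hasDerivAt_slice2 (hD2d (a,b,c))))
    have h0 := hd.deriv
    rw [hg, deriv_const] at h0
    exact h0.symm
  -- second derivatives of the PDE
  have hP11 : ∀ a b c : ℝ,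
      Dv u1 (Dv u1 (Dv u3 C)) (a,b,c)
        + ((deriv (fun y => deriv (fun z => v (z,c)) y) a * Dv u1 C (a,b,c)
              + deriv (fun y => v (y,c)) a * Dv u1 (Dv u1 C) (a,b,c))
           + (deriv (fun y => v (y,c)) a * Dv u1 (Dv u1 C) (a,b,c)
              + v (a,c) * Dv u1 (Dv u1 (Dv u1 C)) (a,b,c)))
        + v (b,c) * Dv u1 (Dv u1 (Dv u2 C)) (a,b,c) = 0 := by
    intro a b c
    have hg : (fun y => Dv u1 (Dv u3 C) (y,b,c)
        + (deriv (fun z => v (z,c)) y * Dv u1 C (y,b,c)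
            + v (y,c) * Dv u1 (Dv u1 C) (y,b,c))
        + v (b,c) * Dv u1 (Dv u2 C) (y,b,c)) = fun _ => (0:ℝ) := funext fun y => hP1 y b c
    have hd : HasDerivAt (fun y => Dv u1 (Dv u3 C) (y,b,c)
        + (deriv (fun z => v (z,c)) y * Dv u1 C (y,b,c)
            + v (y,c) * Dv u1 (Dv u1 C) (y,b,c))
        + v (b,c) * Dv u1 (Dv u2 C) (y,b,c))
        (Dv u1 (Dv u1 (Dv u3 C)) (a,b,c)
          + ((deriv (fun y => deriv (fun z => v (z,c)) y) a * Dv u1 C (a,b,c)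
                + deriv (fun y => v (y,c)) a * Dv u1 (Dv u1 C) (a,b,c))
             + (deriv (fun y => v (y,c)) a * Dv u1 (Dv u1 C) (a,b,c)
                + v (a,c) * Dv u1 (Dv u1 (Dv u1 C)) (a,b,c)))
          + v (b,c) * Dv u1 (Dv u1 (Dv u2 C)) (a,b,c)) a :=
      ((hasDerivAt_slice1 (hD13d (a,b,c))).add
        (((hvda' a c).mul (hasDerivAt_slice1 (hD1d (a,b,c)))).add
          ((hvda a c).mul (hasDerivAt_slice1 (hD11d (a,b,c)))))).add
        ((hasDerivAt_slice1 (hD12d (a,b,c))).const_mul (v (b,c)))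
    have h0 := hd.deriv
    rw [hg, deriv_const] at h0
    exact h0.symm
  have hP12 : ∀ a b c : ℝ,
      Dv u2 (Dv u1 (Dv u3 C)) (a,b,c)
        + (deriv (fun y => v (y,c)) a * Dv u2 (Dv u1 C) (a,b,c)
            + v (a,c) * Dv u2 (Dv u1 (Dv u1 C)) (a,b,c))
        + (deriv (fun y => v (y,c)) b * Dv u1 (Dv u2 C) (a,b,c)
            + v (b,c) * Dv u2 (Dv u1 (Dv u2 C)) (a,b,c)) = 0 := by
    intro a b c
    have hg : (fun y => Dv u1 (Dv u3 C) (a,y,c)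
        + (deriv (fun z => v (z,c)) a * Dv u1 C (a,y,c)
            + v (a,c) * Dv u1 (Dv u1 C) (a,y,c))
        + v (y,c) * Dv u1 (Dv u2 C) (a,y,c)) = fun _ => (0:ℝ) := funext fun y => hP1 a y c
    have hd : HasDerivAt (fun y => Dv u1 (Dv u3 C) (a,y,c)
        + (deriv (fun z => v (z,c)) a * Dv u1 C (a,y,c)
            + v (a,c) * Dv u1 (Dv u1 C) (a,y,c))
        + v (y,c) * Dv u1 (Dv u2 C) (a,y,c))
        (Dv u2 (Dv u1 (Dv u3 C)) (a,b,c)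
          + (deriv (fun z => v (z,c)) a * Dv u2 (Dv u1 C) (a,b,c)
              + v (a,c) * Dv u2 (Dv u1 (Dv u1 C)) (a,b,c))
          + (deriv (fun y => v (y,c)) b * Dv u1 (Dv u2 C) (a,b,c)
              + v (b,c) * Dv u2 (Dv u1 (Dv u2 C)) (a,b,c))) b :=
      ((hasDerivAt_slice2 (hD13d (a,b,c))).add
        (((hasDerivAt_slice2 (hD1d (a,b,c))).const_mul (deriv (fun z => v (z,c)) a)).add
          ((hasDerivAt_slice2 (hD11d (a,b,c))).const_mul (v (a,c))))).add
        ((hvda b c).mul (hasDerivAt_slice2 (hD12d (a,b,c))))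
    have h0 := hd.deriv
    rw [hg, deriv_const] at h0
    exact h0.symm
  have hP22 : ∀ a b c : ℝ,
      Dv u2 (Dv u2 (Dv u3 C)) (a,b,c)
        + v (a,c) * Dv u2 (Dv u2 (Dv u1 C)) (a,b,c)
        + ((deriv (fun y => deriv (fun z => v (z,c)) y) b * Dv u2 C (a,b,c)
              + deriv (fun y => v (y,c)) b * Dv u2 (Dv u2 C) (a,b,c))
           + (deriv (fun y => v (y,c)) b * Dv u2 (Dv u2 C) (a,b,c)
              + v (b,c) * Dv u2 (Dv u2 (Dv u2 C)) (a,b,c))) = 0 := by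
    intro a b c
    have hg : (fun y => Dv u2 (Dv u3 C) (a,y,c)
        + v (a,c) * Dv u2 (Dv u1 C) (a,y,c)
        + (deriv (fun z => v (z,c)) y * Dv u2 C (a,y,c)
            + v (y,c) * Dv u2 (Dv u2 C) (a,y,c))) = fun _ => (0:ℝ) := funext fun y => hP2 a y c
    have hd : HasDerivAt (fun y => Dv u2 (Dv u3 C) (a,y,c)
        + v (a,c) * Dv u2 (Dv u1 C) (a,y,c)
        + (deriv (fun z => v (z,c)) y * Dv u2 C (a,y,c)
            + v (y,c) * Dv u2 (Dv u2 C) (a,y,c)))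
        (Dv u2 (Dv u2 (Dv u3 C)) (a,b,c)
          + v (a,c) * Dv u2 (Dv u2 (Dv u1 C)) (a,b,c)
          + ((deriv (fun y => deriv (fun z => v (z,c)) y) b * Dv u2 C (a,b,c)
                + deriv (fun y => v (y,c)) b * Dv u2 (Dv u2 C) (a,b,c))
             + (deriv (fun y => v (y,c)) b * Dv u2 (Dv u2 C) (a,b,c)
                + v (b,c) * Dv u2 (Dv u2 (Dv u2 C)) (a,b,c)))) b :=
      ((hasDerivAt_slice2 (hD23d (a,b,c))).add
        ((hasDerivAt_slice2 (hD21d (a,b,c))).const_mul (v (a,c)))).add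
        (((hvda' b c).mul (hasDerivAt_slice2 (hD2d (a,b,c)))).add
          ((hvda b c).mul (hasDerivAt_slice2 (hD22d (a,b,c)))))
    have h0 := hd.deriv
    rw [hg, deriv_const] at h0
    exact h0.symm
  -- diagonal first-derivative identity
  have hdg : ∀ a c : ℝ, Dv u1 C (a,a,c) + Dv u2 C (a,a,c) = 0 := by
    intro a c
    have hg : (fun y => C (y,y,c)) = fun _ => (1:ℝ) := funext fun y => hdiag y c
    have h0 := (hasDerivAt_diag (hCd (a,a,c))).deriv
    rw [hg, deriv_const] at h0
    exact h0.symm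
  -- C2diag in Dv form
  have hC2eq : ∀ y s : ℝ, C2diag C y s
      = Dv u1 (Dv u1 C) (y,y,s) - 2 * Dv u1 (Dv u2 C) (y,y,s) + Dv u2 (Dv u2 C) (y,y,s) := by
    intro y s
    have e1 : deriv (fun z => C (z, y, s)) = fun z => Dv u1 C (z, y, s) :=
      funext fun z => (hasDerivAt_slice1 (hCd (z,y,s))).deriv
    have e2 : (fun y₁ => deriv (fun y₂ => C (y₁, y₂, s)) y)
        = fun y₁ => Dv u2 C (y₁, y, s) :=
      funext fun y₁ => (hasDerivAt_slice2 (hCd (y₁,y,s))).deriv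
    have e3 : deriv (fun z => C (y, z, s)) = fun z => Dv u2 C (y, z, s) :=
      funext fun z => (hasDerivAt_slice2 (hCd (y,z,s))).deriv
    unfold C2diag
    rw [e1, e2, e3,
      (hasDerivAt_slice1 (hD1d (y,y,s))).deriv,
      (hasDerivAt_slice1 (hD2d (y,y,s))).deriv,
      (hasDerivAt_slice2 (hD2d (y,y,s))).deriv]
  -- time derivative of C2diag
  have hTt : deriv (fun τ => C2diag C x τ) t
      = Dv u3 (Dv u1 (Dv u1 C)) (x,x,t) - 2 * Dv u3 (Dv u1 (Dv u2 C)) (x,x,t)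
        + Dv u3 (Dv u2 (Dv u2 C)) (x,x,t) := by
    have hg : (fun τ => C2diag C x τ)
        = fun τ => Dv u1 (Dv u1 C) (x,x,τ) - 2 * Dv u1 (Dv u2 C) (x,x,τ)
            + Dv u2 (Dv u2 C) (x,x,τ) := funext fun τ => hC2eq x τ
    rw [hg]
    exact (((hasDerivAt_slice3 (hD11d (x,x,t))).sub
      ((hasDerivAt_slice3 (hD12d (x,x,t))).const_mul 2)).add
      (hasDerivAt_slice3 (hD22d (x,x,t)))).deriv
  -- space derivative of C2diag
  have hTx : deriv (fun y => C2diag C y t) x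
      = (Dv u1 (Dv u1 (Dv u1 C)) (x,x,t) + Dv u2 (Dv u1 (Dv u1 C)) (x,x,t))
        - 2 * (Dv u1 (Dv u1 (Dv u2 C)) (x,x,t) + Dv u2 (Dv u1 (Dv u2 C)) (x,x,t))
        + (Dv u1 (Dv u2 (Dv u2 C)) (x,x,t) + Dv u2 (Dv u2 (Dv u2 C)) (x,x,t)) := by
    have hg : (fun y => C2diag C y t)
        = fun y => Dv u1 (Dv u1 C) (y,y,t) - 2 * Dv u1 (Dv u2 C) (y,y,t)
            + Dv u2 (Dv u2 C) (y,y,t) := funext fun y => hC2eq y t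
    rw [hg]
    exact (((hasDerivAt_diag (hD11d (x,x,t))).sub
      ((hasDerivAt_diag (hD12d (x,x,t))).const_mul 2)).add
      (hasDerivAt_diag (hD22d (x,x,t)))).deriv
  -- symmetry facts at p = (x,x,t)
  have e0 : Dv u2 (Dv u1 C) (x,x,t) = Dv u1 (Dv u2 C) (x,x,t) := Dv_swap hC2 u1 u2 (x,x,t)
  have e1 : Dv u3 (Dv u1 (Dv u1 C)) (x,x,t) = Dv u1 (Dv u1 (Dv u3 C)) (x,x,t) := by
    rw [Dv_swap hD1 u1 u3 (x,x,t), Dv_swap_fun hC2 u1 u3]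
  have e2 : Dv u3 (Dv u1 (Dv u2 C)) (x,x,t) = Dv u2 (Dv u1 (Dv u3 C)) (x,x,t) := by
    rw [Dv_swap hD2 u1 u3 (x,x,t), Dv_swap_fun hC2 u2 u3, Dv_swap hD3 u1 u2 (x,x,t)]
  have e3 : Dv u3 (Dv u2 (Dv u2 C)) (x,x,t) = Dv u2 (Dv u2 (Dv u3 C)) (x,x,t) := by
    rw [Dv_swap hD2 u2 u3 (x,x,t), Dv_swap_fun hC2 u2 u3]
  have e4 : Dv u2 (Dv u2 (Dv u1 C)) (x,x,t) = Dv u1 (Dv u2 (Dv u2 C)) (x,x,t) := by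
    rw [Dv_swap_fun hC2 u1 u2, Dv_swap hD2 u1 u2 (x,x,t)]
  have e5 : Dv u2 (Dv u1 (Dv u1 C)) (x,x,t) = Dv u1 (Dv u1 (Dv u2 C)) (x,x,t) := by
    rw [Dv_swap hD1 u1 u2 (x,x,t), Dv_swap_fun hC2 u1 u2]
  -- assemble
  rw [hTt, hTx, hC2eq x t]
  linear_combination (hP11 x x t) - 2 * (hP12 x x t) + (hP22 x x t)
    + e1 - 2 * e2 + e3 + 3 * v (x,t) * e5 - v (x,t) * e4
    + 2 * deriv (fun y => v (y,t)) x * e0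
    - deriv (fun y => deriv (fun z => v (z,t)) y) x * (hdg x t)
end

section
/- Let v : ℝ × ℝ → ℝ be differentiable in x and let C₂ : ℝ × ℝ → ℝ be differentiable with C₂(x,t) < 0 for all (x,t) and satisfying the transport equation ∂_t C₂ + v(x,t) ∂_x C₂ + 2 v_x(x,t) C₂ = 0. Then the correlation length L(x,t) := (−C₂(x,t))^{−1/2} satisfies the correlation length equation ∂_t L + v(x,t) ∂_x L − v_x(x,t) L = 0 for all (x,t). -/
lemma deriv_inv_sqrt_neg {f : ℝ → ℝ} {s f' : ℝ} (hf : HasDerivAt f f' s)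
    (hneg : f s < 0) :
    HasDerivAt (fun s => (Real.sqrt (-f s))⁻¹)
      (f' / (2 * (-f s) * Real.sqrt (-f s))) s := by
  have hpos : 0 < -f s := by linarith
  have hsq : Real.sqrt (-f s) ≠ 0 := ne_of_gt (Real.sqrt_pos.mpr hpos)
  have h1 : HasDerivAt (fun s => Real.sqrt (-f s)) (-f' / (2 * Real.sqrt (-f s))) s := by
    have := (Real.hasDerivAt_sqrt (ne_of_gt hpos)).comp s hf.neg
    refine this.congr_deriv ?_
    field_simp
  have h2 := h1.inv hsq
  refine h2.congr_deriv ?_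
  rw [Real.sq_sqrt hpos.le]
  field_simp

/-- If `C₂ < 0` satisfies the transport equation
`∂_t C₂ + v ∂_x C₂ + 2 v_x C₂ = 0`, then the correlation length
`L(x,t) := (−C₂(x,t))^{−1/2}` satisfies `∂_t L + v ∂_x L − v_x L = 0`. -/
theorem correlation_length_equation
    (v C₂ : ℝ × ℝ → ℝ)
    (hv : ∀ t, Differentiable ℝ (fun x => v (x, t)))
    (hC₂x : ∀ t, Differentiable ℝ (fun x => C₂ (x, t)))
    (hC₂t : ∀ x, Differentiable ℝ (fun t => C₂ (x, t)))
    (hneg : ∀ x t, C₂ (x, t) < 0)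
    (hpde : ∀ x t,
      deriv (fun τ => C₂ (x, τ)) t + v (x, t) * deriv (fun y => C₂ (y, t)) x
        + 2 * deriv (fun y => v (y, t)) x * C₂ (x, t) = 0) :
    ∀ x t,
      deriv (fun τ => (Real.sqrt (-C₂ (x, τ)))⁻¹) t
        + v (x, t) * deriv (fun y => (Real.sqrt (-C₂ (y, t)))⁻¹) x
        - deriv (fun y => v (y, t)) x * (Real.sqrt (-C₂ (x, t)))⁻¹ = 0 := by
  intro x t
  set Ct := deriv (fun τ => C₂ (x, τ)) t
  set Cx := deriv (fun y => C₂ (y, t)) x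
  set vx := deriv (fun y => v (y, t)) x
  have ht := ((hC₂t x t).hasDerivAt)
  have hx := ((hC₂x t x).hasDerivAt)
  have hLt := (deriv_inv_sqrt_neg ht (hneg x t)).deriv
  have hLx := (deriv_inv_sqrt_neg hx (hneg x t)).deriv
  rw [hLt, hLx]
  have hpos : 0 < -C₂ (x, t) := by linarith [hneg x t]
  have hsq : Real.sqrt (-C₂ (x, t)) ≠ 0 := ne_of_gt (Real.sqrt_pos.mpr hpos)
  have hpde' := hpde x t
  have hsum : Ct + v (x, t) * Cx = 2 * vx * (-C₂ (x, t)) := by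
    simp only [Ct, Cx, vx] at *; linarith
  have hs2 : Real.sqrt (-C₂ (x, t)) * Real.sqrt (-C₂ (x, t)) = -C₂ (x, t) :=
    Real.mul_self_sqrt hpos.le
  rw [← mul_div_assoc, ← add_div, hsum]
  have hspos : (0:ℝ) < Real.sqrt (-C₂ (x, t)) := Real.sqrt_pos.mpr hpos
  have hC : C₂ (x, t) ≠ 0 := ne_of_lt (hneg x t)
  field_simp
  ring
end

section
/- Let v : ℝ → ℝ be Lipschitz continuous (time-independent) and let C : ℝ × ℝ × ℝ → ℝ be differentiable and satisfy the correlation equation ∂_t C(x₁,x₂,t) + v(x₁) ∂_{x₁} C(x₁,x₂,t) + v(x₂) ∂_{x₂} C(x₁,x₂,t) = 0 for all (x₁,x₂,t). If C(x₁,x₂,0) ≥ 0 for all x₁, x₂, then C(x₁,x₂,t) ≥ 0 for all x₁, x₂ and all t ≥ 0. -/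
open Set

/-- Short-time existence for a globally Lipschitz autonomous ODE on `ℝ`. -/
lemma ode_step {w : ℝ → ℝ} {K : NNReal} (hw : LipschitzWith K w) (a b x₀ : ℝ)
    (hab : a ≤ b) (hsmall : b - a ≤ 1 / (2 * ((K : ℝ) + 1))) :
    ∃ f : ℝ → ℝ, f a = x₀ ∧
      ∀ s ∈ Icc a b, HasDerivWithinAt f (w (f s)) (Icc a b) s := by
  set R : ℝ := |w x₀| + 1 with hR
  set Cb : ℝ := |w x₀| + K * R with hCb
  have hKnn : (0 : ℝ) ≤ K := K.coe_nonneg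
  have habs : (0 : ℝ) ≤ |w x₀| := abs_nonneg _
  have hpl : IsPicardLindelof (fun _ x => w x) (tmin := a) (tmax := b) ⟨a, le_refl a, hab⟩ x₀
      ⟨R, by rw [hR]; positivity⟩ 0 ⟨Cb, by rw [hCb, hR]; positivity⟩ K := by
    refine ⟨fun t _ => hw.lipschitzOnWith,
      fun x _ => continuousOn_const, ?_, ?_⟩
    · intro t _ x hx
      have h1 : |w x - w x₀| ≤ K * |x - x₀| := by
        simpa [Real.dist_eq] using hw.dist_le_mul x x₀
      have h2 : |x - x₀| ≤ R := by
        simpa [Real.dist_eq] using (Metric.mem_closedBall.mp hx : dist x x₀ ≤ R)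
      have h3 : |w x| ≤ |w x - w x₀| + |w x₀| := by
        calc |w x| = |(w x - w x₀) + w x₀| := by ring_nf
        _ ≤ |w x - w x₀| + |w x₀| := abs_add_le _ _
      have h4 : (K : ℝ) * |x - x₀| ≤ K * R := by nlinarith
      show ‖w x‖ ≤ Cb
      rw [Real.norm_eq_abs]
      nlinarith
    · show Cb * max (b - a) (a - a) ≤ R - ((0:NNReal):ℝ)
      rw [NNReal.coe_zero, sub_zero]
      have hmax : max (b - a) (a - a) = b - a := by
        simp [max_eq_left, sub_nonneg.mpr hab]
      rw [hmax]
      have hden : (0 : ℝ) < 2 * ((K : ℝ) + 1) := by positivity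
      have hε : (b - a) * (2 * ((K : ℝ) + 1)) ≤ 1 := by
        rw [div_eq_inv_mul] at hsmall
        calc (b - a) * (2 * ((K : ℝ) + 1)) ≤ (2 * ((K : ℝ) + 1))⁻¹ * 1 * (2 * ((K : ℝ) + 1)) := by
              nlinarith
        _ = 1 := by field_simp
      have hba : (0 : ℝ) ≤ b - a := sub_nonneg.mpr hab
      show Cb * (b - a) ≤ R
      rw [hCb, hR]
      nlinarith [mul_nonneg hKnn habs, mul_nonneg (mul_nonneg hKnn habs) hba,
        mul_nonneg hKnn hba, mul_nonneg habs hba]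
  obtain ⟨f, hf0, hf⟩ := hpl.exists_eq_forall_mem_Icc_hasDerivWithinAt₀
  exact ⟨f, hf0, fun s hs => hf s hs⟩

/-- Existence on intervals of length at most `n` small steps, by gluing. -/
lemma ode_steps {w : ℝ → ℝ} {K : NNReal} (hw : LipschitzWith K w) (n : ℕ) :
    ∀ a b x₀ : ℝ, a ≤ b → b - a ≤ n * (1 / (2 * ((K : ℝ) + 1))) →
    ∃ f : ℝ → ℝ, f a = x₀ ∧
      ∀ s ∈ Icc a b, HasDerivWithinAt f (w (f s)) (Icc a b) s := by
  induction n with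
  | zero =>
      intro a b x₀ hab h
      refine ode_step hw a b x₀ hab ?_
      have : b - a ≤ 0 := by simpa using h
      have : (0:ℝ) ≤ 1 / (2 * ((K : ℝ) + 1)) := by positivity
      linarith
  | succ n ih =>
      intro a b x₀ hab h
      set ε : ℝ := 1 / (2 * ((K : ℝ) + 1)) with hεdef
      have hεpos : 0 < ε := by rw [hεdef]; positivity
      by_cases hb : b - a ≤ ε
      · exact ode_step hw a b x₀ hab hb
      · push_neg at hb
        set m : ℝ := a + ε with hm
        have ham : a ≤ m := by rw [hm]; linarith
        have hmb : m ≤ b := by rw [hm]; linarith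
        obtain ⟨f, hfa, hf⟩ := ode_step hw a m x₀ ham (le_of_eq (by rw [hm, hεdef]; ring))
        obtain ⟨g, hgm, hg⟩ := ih m b (f m) hmb (by
          push_cast at h; rw [hm]; push_cast; linarith)
        refine ⟨fun s => if s ≤ m then f s else g s, by simp [ham, hfa], ?_⟩
        intro s hs
        rcases lt_trichotomy s m with hsm | hsm | hsm
        · -- s < m : locally equal to f
          have hmem : Iio m ∈ nhds s := Iio_mem_nhds hsm
          have h1 : HasDerivWithinAt (fun s => if s ≤ m then f s else g s)
              (w (f s)) (Icc a b ∩ Iio m) s :=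
            ((hf s ⟨hs.1, hsm.le⟩).mono fun u hu => ⟨hu.1.1, hu.2.le⟩).congr
              (fun u hu => if_pos hu.2.le) (if_pos hsm.le)
          have h2 := (hasDerivWithinAt_inter hmem).mp h1
          simpa [if_pos hsm.le] using h2
        · -- s = m : glue left and right
          have hL : HasDerivWithinAt (fun u => if u ≤ m then f u else g u)
              (w (f m)) (Icc a m) m :=
            (hf m ⟨ham, le_rfl⟩).congr (fun u hu => if_pos hu.2) (if_pos le_rfl)
          have hR : HasDerivWithinAt (fun u => if u ≤ m then f u else g u)
              (w (f m)) (Icc m b) m := by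
            have h2 : HasDerivWithinAt g (w (g m)) (Icc m b) m := hg m ⟨le_rfl, hmb⟩
            rw [hgm] at h2
            refine h2.congr ?_ (by rw [if_pos le_rfl]; exact hgm.symm)
            intro u hu
            by_cases hus : u ≤ m
            · have : u = m := le_antisymm hus hu.1
              rw [this, if_pos le_rfl, hgm]
            · rw [if_neg hus]
          have hBoth := (hL.union hR).mono (fun u (hu : u ∈ Icc a b) => by
            rcases le_total u m with h' | h'
            · exact Or.inl ⟨hu.1, h'⟩
            · exact Or.inr ⟨h', hu.2⟩)
          rw [hsm]
          simpa [if_pos le_rfl] using hBoth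
        · -- s > m : locally equal to g
          have hmem : Ioi m ∈ nhds s := Ioi_mem_nhds hsm
          have h1 : HasDerivWithinAt (fun s => if s ≤ m then f s else g s)
              (w (g s)) (Icc a b ∩ Ioi m) s :=
            ((hg s ⟨hsm.le, hs.2⟩).mono fun u hu => ⟨hu.2.le, hu.1.2⟩).congr
              (fun u hu => if_neg (not_le.mpr hu.2)) (if_neg (not_le.mpr hsm))
          have h2 := (hasDerivWithinAt_inter hmem).mp h1
          simpa [if_neg (not_le.mpr hsm)] using h2

/-- Global existence for a globally Lipschitz autonomous ODE on `ℝ`. -/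
lemma ode_global {w : ℝ → ℝ} {K : NNReal} (hw : LipschitzWith K w)
    (a b x₀ : ℝ) (hab : a ≤ b) :
    ∃ f : ℝ → ℝ, f a = x₀ ∧
      ∀ s ∈ Icc a b, HasDerivWithinAt f (w (f s)) (Icc a b) s := by
  set ε : ℝ := 1 / (2 * ((K : ℝ) + 1)) with hεdef
  have hεpos : 0 < ε := by rw [hεdef]; positivity
  refine ode_steps hw ⌈(b - a) / ε⌉₊ a b x₀ hab ?_
  have h1 : (b - a) / ε ≤ (⌈(b - a) / ε⌉₊ : ℝ) := Nat.le_ceil _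
  calc b - a = (b - a) / ε * ε := by field_simp
  _ ≤ (⌈(b - a) / ε⌉₊ : ℝ) * ε := by nlinarith

/-- For a Lipschitz, time-independent velocity `v`, solutions of the correlation
equation `∂_t C + v(x₁) ∂_{x₁} C + v(x₂) ∂_{x₂} C = 0` with nonnegative initial
data remain nonnegative for all `t ≥ 0`. -/
theorem correlation_nonnegativity
    (v : ℝ → ℝ) (hv : ∃ K : NNReal, LipschitzWith K v)
    (C : ℝ × ℝ × ℝ → ℝ) (hC : Differentiable ℝ C)
    (hpde : ∀ x₁ x₂ t,
      deriv (fun τ => C (x₁, x₂, τ)) t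
        + v x₁ * deriv (fun y => C (y, x₂, t)) x₁
        + v x₂ * deriv (fun y => C (x₁, y, t)) x₂ = 0)
    (h0 : ∀ x₁ x₂, 0 ≤ C (x₁, x₂, 0)) :
    ∀ x₁ x₂ t, 0 ≤ t → 0 ≤ C (x₁, x₂, t) := by
  intro x₁ x₂ t ht
  obtain ⟨K, hvK⟩ := hv
  -- the reversed velocity field
  set w : ℝ → ℝ := fun y => -(v y) with hw
  have hwK : LipschitzWith K w := by
    refine LipschitzWith.of_dist_le_mul fun x y => ?_
    have h := hvK.dist_le_mul x y
    simp only [Real.dist_eq] at h ⊢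
    calc |w x - w y| = |v x - v y| := by
          simp only [hw]
          rw [show -(v x) - -(v y) = -(v x - v y) by ring, abs_neg]
    _ ≤ K * |x - y| := h
  -- characteristics through (x₁, x₂) at time t, traced backwards
  obtain ⟨δ₁, hδ₁0, hδ₁⟩ := ode_global hwK 0 t x₁ ht
  obtain ⟨δ₂, hδ₂0, hδ₂⟩ := ode_global hwK 0 t x₂ ht
  set γ₁ : ℝ → ℝ := fun s => δ₁ (t - s) with hγ₁def
  set γ₂ : ℝ → ℝ := fun s => δ₂ (t - s) with hγ₂def
  have hrev : ∀ s ∈ Icc (0:ℝ) t, MapsTo (fun u : ℝ => t - u) (Icc 0 t) (Icc 0 t) := by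
    intro s _ u hu
    simp only [mem_Icc] at hu ⊢
    constructor <;> linarith [hu.1, hu.2]
  have hγ : ∀ (δ : ℝ → ℝ),
      (∀ s ∈ Icc (0:ℝ) t, HasDerivWithinAt δ (w (δ s)) (Icc 0 t) s) →
      ∀ s ∈ Icc (0:ℝ) t,
        HasDerivWithinAt (fun u => δ (t - u)) (v (δ (t - s))) (Icc 0 t) s := by
    intro δ hδ s hs
    have hts : t - s ∈ Icc (0:ℝ) t := ⟨by linarith [hs.2], by linarith [hs.1]⟩
    have hu : HasDerivWithinAt (fun u : ℝ => t - u) (-1) (Icc 0 t) s := by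
      simpa [Pi.sub_def] using ((hasDerivWithinAt_const s (Icc (0:ℝ) t) t).sub
        (hasDerivWithinAt_id s (Icc (0:ℝ) t)))
    have := (hδ (t - s) hts).comp s hu (hrev s hs)
    simpa [hw, Function.comp_def] using this
  have hγ₁' := hγ δ₁ hδ₁
  have hγ₂' := hγ δ₂ hδ₂
  -- the solution along the characteristic
  set g : ℝ → ℝ := fun s => C (γ₁ s, γ₂ s, s) with hgdef
  -- partial derivatives in terms of the Fréchet derivative
  have hpart : ∀ p : ℝ × ℝ × ℝ,
      deriv (fun τ => C (p.1, p.2.1, τ)) p.2.2 = fderiv ℝ C p (0, 0, 1) ∧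
      deriv (fun y => C (y, p.2.1, p.2.2)) p.1 = fderiv ℝ C p (1, 0, 0) ∧
      deriv (fun y => C (p.1, y, p.2.2)) p.2.1 = fderiv ℝ C p (0, 1, 0) := by
    rintro ⟨a, b, c⟩
    refine ⟨?_, ?_, ?_⟩
    · have hp : HasDerivAt (fun τ : ℝ => ((a:ℝ), (b:ℝ), τ)) ((0:ℝ), (0:ℝ), (1:ℝ)) c :=
        (hasDerivAt_const c a).prodMk ((hasDerivAt_const c b).prodMk (hasDerivAt_id c))
      exact ((hC (a, b, c)).hasFDerivAt.comp_hasDerivAt c hp).deriv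
    · have hp : HasDerivAt (fun y : ℝ => (y, (b:ℝ), (c:ℝ))) ((1:ℝ), (0:ℝ), (0:ℝ)) a :=
        (hasDerivAt_id a).prodMk ((hasDerivAt_const a b).prodMk (hasDerivAt_const a c))
      exact ((hC (a, b, c)).hasFDerivAt.comp_hasDerivAt a hp).deriv
    · have hp : HasDerivAt (fun y : ℝ => ((a:ℝ), y, (c:ℝ))) ((0:ℝ), (1:ℝ), (0:ℝ)) b :=
        (hasDerivAt_const b a).prodMk ((hasDerivAt_id b).prodMk (hasDerivAt_const b c))
      exact ((hC (a, b, c)).hasFDerivAt.comp_hasDerivAt b hp).deriv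
  -- g has derivative 0 on [0, t]
  have hg0 : ∀ s ∈ Icc (0:ℝ) t, HasDerivWithinAt g 0 (Icc 0 t) s := by
    intro s hs
    have hp : HasDerivWithinAt (fun u => (γ₁ u, γ₂ u, u))
        (v (γ₁ s), v (γ₂ s), (1:ℝ)) (Icc 0 t) s :=
      (hγ₁' s hs).prodMk ((hγ₂' s hs).prodMk (hasDerivWithinAt_id s _))
    have hcomp := (hC (γ₁ s, γ₂ s, s)).hasFDerivAt.comp_hasDerivWithinAt s hp
    have hlin : fderiv ℝ C (γ₁ s, γ₂ s, s) (v (γ₁ s), v (γ₂ s), (1:ℝ)) = 0 := by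
      set D := fderiv ℝ C (γ₁ s, γ₂ s, s) with hD
      have hdecomp : (v (γ₁ s), v (γ₂ s), (1:ℝ)) =
          v (γ₁ s) • ((1:ℝ), (0:ℝ), (0:ℝ)) + v (γ₂ s) • ((0:ℝ), (1:ℝ), (0:ℝ))
            + ((0:ℝ), (0:ℝ), (1:ℝ)) := by
        simp only [Prod.smul_mk, Prod.mk_add_mk, smul_eq_mul, mul_one, mul_zero,
          add_zero, zero_add]
      rw [hdecomp, map_add, map_add, map_smul, map_smul]
      obtain ⟨h1, h2, h3⟩ := hpart (γ₁ s, γ₂ s, s)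
      have := hpde (γ₁ s) (γ₂ s) s
      rw [h1, h2, h3] at this
      simp only [smul_eq_mul]
      linarith
    rwa [hlin] at hcomp
  -- g is constant on [0, t]
  have hconst : ∀ s ∈ Icc (0:ℝ) t, g s = g 0 := by
    refine constant_of_has_deriv_right_zero
      (fun s hs => (hg0 s hs).continuousWithinAt) (fun s hs => ?_)
    refine (hg0 s ⟨hs.1, hs.2.le⟩).mono_of_mem_nhdsWithin ?_
    rw [mem_nhdsWithin]
    exact ⟨Iio t, isOpen_Iio, hs.2, fun u hu => ⟨le_trans hs.1 hu.2, hu.1.le⟩⟩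
  have hgt : g t = g 0 := hconst t ⟨ht, le_rfl⟩
  have hgtval : g t = C (x₁, x₂, t) := by
    simp [hgdef, hγ₁def, hγ₂def, hδ₁0, hδ₂0]
  have hg0val : g 0 = C (δ₁ t, δ₂ t, 0) := by
    simp [hgdef, hγ₁def, hγ₂def]
  rw [← hgtval, hgt, hg0val]
  exact h0 _ _
end

section
/- Let N be a positive integer, Δx > 0, and v : ZMod N → ℝ. Let q : ℝ → (ZMod N → ℝ) be differentiable and satisfy the semi-discrete centered-difference scheme q_i'(t) = (1/(4Δx)) (v_{i−1} q_{i−1}(t) − v_{i+1} q_{i+1}(t)) + (v_i/(4Δx)) (q_{i−1}(t) − q_{i+1}(t)) for all i ∈ ZMod N and all t. Then the discrete energy t ↦ Σ_{i ∈ ZMod N} q_i(t)² is constant. -/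
/-- The semi-discrete centered-difference scheme
`q_i' = (1/(4Δx))(v_{i−1} q_{i−1} − v_{i+1} q_{i+1}) + (v_i/(4Δx))(q_{i−1} − q_{i+1})`
on the periodic grid `ZMod N` exactly conserves the discrete energy `Σ_i q_i²`. -/
theorem centered_difference_discrete_energy_conservation
    (N : ℕ) [NeZero N] (Δx : ℝ) (hΔx : 0 < Δx) (v : ZMod N → ℝ)
    (q : ℝ → ZMod N → ℝ)
    (hq : ∀ (i : ZMod N) (t : ℝ),
      HasDerivAt (fun s => q s i)
        ((1 / (4 * Δx)) * (v (i - 1) * q t (i - 1) - v (i + 1) * q t (i + 1))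
          + (v i / (4 * Δx)) * (q t (i - 1) - q t (i + 1))) t) :
    ∀ t₁ t₂ : ℝ, ∑ i : ZMod N, q t₁ i ^ 2 = ∑ i : ZMod N, q t₂ i ^ 2 := by
  have hE : ∀ t : ℝ, HasDerivAt (fun s => ∑ i : ZMod N, q s i ^ 2) 0 t := by
    intro t
    have hsum := HasDerivAt.sum (fun i (_ : i ∈ Finset.univ) => (hq i t).pow 2)
    convert hsum using 1
    · rfl
    · rfl
    · ext s; simp [Finset.sum_apply]
    set G : ZMod N → ℝ := fun i =>
      (1 / (4 * Δx)) * (2 * (v i + v (i + 1)) * q t i * q t (i + 1)) with hG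
    have key : ∀ i ∈ Finset.univ, ((2 : ℕ) : ℝ) * q t i ^ (2 - 1) *
        ((1 / (4 * Δx)) * (v (i - 1) * q t (i - 1) - v (i + 1) * q t (i + 1))
          + (v i / (4 * Δx)) * (q t (i - 1) - q t (i + 1)))
        = G (i - 1) - G i := by
      intro i _
      simp only [hG, sub_add_cancel]
      push_cast
      ring
    symm
    rw [Finset.sum_congr rfl key, Finset.sum_sub_distrib]
    have : ∑ i : ZMod N, G (i - 1) = ∑ i : ZMod N, G i :=
      Equiv.sum_comp (Equiv.subRight (1 : ZMod N)) G
    rw [this, sub_self]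
  intro t₁ t₂
  exact is_const_of_deriv_eq_zero
    (fun x => (hE x).differentiableAt) (fun x => (hE x).deriv) t₁ t₂
end

section
/- Let N be a positive integer, Δx > 0, v, b : ZMod N → ℝ, and let P : ℝ → Matrix (ZMod N) (ZMod N) ℝ be differentiable with P_{ii}(t) > 0 for all i and t, satisfying the upwind covariance semi-discretization d/dt P_{ij} = (v_i/Δx)(P_{i−1,j} − P_{ij}) + (v_j/Δx)(P_{i,j−1} − P_{ij}) − (b_i + b_j) P_{ij} for all i, j, t. Define C_{ij}(t) := P_{ij}(t) / √(P_{ii}(t) P_{jj}(t)). Then for all i, j, t: d/dt C_{ij} = (v_i/Δx) √(P_{i−1,i−1}/P_{ii}) [C_{i−1,j} − (1/2) C_{ij} (C_{i−1,i} + C_{i,i−1})] + (v_j/Δx) √(P_{j−1,j−1}/P_{jj}) [C_{i,j−1} − (1/2) C_{ij} (C_{j−1,j} + C_{j,j−1})]. -/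
/-- The correlation matrix entry associated with a covariance matrix `P`:
`C_{ij} = P_{ij} / √(P_{ii} P_{jj})`. -/
noncomputable def corrEntry {N : ℕ} (P : Matrix (ZMod N) (ZMod N) ℝ)
    (i j : ZMod N) : ℝ :=
  P i j / Real.sqrt (P i i * P j j)

/-- The semi-discretization for the correlation implied by the first-order upwind
covariance semi-discretization. -/
theorem upwind_correlation_semidiscretization
    (N : ℕ) (hN : 0 < N) (Δx : ℝ) (hΔx : 0 < Δx) (v b : ZMod N → ℝ)
    (P : ℝ → Matrix (ZMod N) (ZMod N) ℝ)
    (hpos : ∀ (i : ZMod N) (t : ℝ), 0 < P t i i)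
    (hP : ∀ (i j : ZMod N) (t : ℝ),
      HasDerivAt (fun s => P s i j)
        (v i / Δx * (P t (i - 1) j - P t i j)
          + v j / Δx * (P t i (j - 1) - P t i j)
          - (b i + b j) * P t i j) t) :
    ∀ (i j : ZMod N) (t : ℝ),
      HasDerivAt (fun s => corrEntry (P s) i j)
        (v i / Δx * Real.sqrt (P t (i - 1) (i - 1) / P t i i)
            * (corrEntry (P t) (i - 1) j
              - 1 / 2 * corrEntry (P t) i j
                * (corrEntry (P t) (i - 1) i + corrEntry (P t) i (i - 1)))
          + v j / Δx * Real.sqrt (P t (j - 1) (j - 1) / P t j j)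
            * (corrEntry (P t) i (j - 1)
              - 1 / 2 * corrEntry (P t) i j
                * (corrEntry (P t) (j - 1) j + corrEntry (P t) j (j - 1)))) t := by
  intro i j t
  have hG := hpos i t
  have hH := hpos j t
  have hK := hpos (i - 1) t
  have hL := hpos (j - 1) t
  have hGH : (0:ℝ) < P t i i * P t j j := mul_pos hG hH
  have hne : Real.sqrt (P t i i * P t j j) ≠ 0 :=
    (Real.sqrt_pos.mpr hGH).ne'
  have fA := hP i j t
  have fG := hP i i t
  have fH := hP j j t
  have hd : HasDerivAt (fun s => Real.sqrt (P s i i * P s j j))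
      (((v i / Δx * (P t (i - 1) i - P t i i)
          + v i / Δx * (P t i (i - 1) - P t i i)
          - (b i + b i) * P t i i) * P t j j
        + P t i i * (v j / Δx * (P t (j - 1) j - P t j j)
          + v j / Δx * (P t j (j - 1) - P t j j)
          - (b j + b j) * P t j j))
        / (2 * Real.sqrt (P t i i * P t j j))) t :=
    (fG.mul fH).sqrt hGH.ne'
  have key := fA.div hd hne
  simp only [corrEntry]
  refine key.congr_deriv ?_
  symm
  rw [Real.sqrt_div hK.le, Real.sqrt_div hL.le]
  simp only [Real.sqrt_mul hK.le, Real.sqrt_mul hG.le, Real.sqrt_mul hL.le,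
    Real.sqrt_mul hH.le]
  set sg := Real.sqrt (P t i i) with hsg
  set sh := Real.sqrt (P t j j) with hsh
  set sk := Real.sqrt (P t (i - 1) (i - 1)) with hsk
  set sl := Real.sqrt (P t (j - 1) (j - 1)) with hsl
  have hsg0 : sg ≠ 0 := by rw [hsg]; positivity
  have hsh0 : sh ≠ 0 := by rw [hsh]; positivity
  have hsk0 : sk ≠ 0 := by rw [hsk]; positivity
  have hsl0 : sl ≠ 0 := by rw [hsl]; positivity
  have hG2 : sg ^ 2 = P t i i := by rw [hsg]; exact Real.sq_sqrt hG.le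
  have hH2 : sh ^ 2 = P t j j := by rw [hsh]; exact Real.sq_sqrt hH.le
  have hK2 : sk ^ 2 = P t (i - 1) (i - 1) := by rw [hsk]; exact Real.sq_sqrt hK.le
  have hL2 : sl ^ 2 = P t (j - 1) (j - 1) := by rw [hsl]; exact Real.sq_sqrt hL.le
  rw [← hG2, ← hH2]
  field_simp
  ring
end

section
/- Let N be a positive integer, let w : ℝ → (ZMod N → ℝ) be continuous, and let C : ℝ → Matrix (ZMod N) (ZMod N) ℝ be differentiable and satisfy the upwind correlation semi-discretization d/dt C_{ij} = w_i(t) [C_{i−1,j} − (1/2) C_{ij} (C_{i−1,i} + C_{i,i−1})] + w_j(t) [C_{i,j−1} − (1/2) C_{ij} (C_{j−1,j} + C_{j,j−1})] for all i, j, t. If C_{ii}(t₀) = 1 for all i at some time t₀, then C_{ii}(t) = 1 for all i and all t. -/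
/-- A scalar linear homogeneous ODE with continuous coefficient and zero
initial data stays zero for all future times. -/
lemma linear_ode_zero_forward (b g : ℝ → ℝ) (hb : Continuous b)
    (hg : ∀ t, HasDerivAt g (b t * g t) t) (t₀ : ℝ) (h0 : g t₀ = 0) :
    ∀ t, t₀ ≤ t → g t = 0 := by
  intro t ht
  obtain ⟨K, hK⟩ := (isCompact_Icc (a := t₀) (b := t)).exists_bound_of_continuousOn
    (hb.continuousOn)
  have := norm_le_gronwallBound_of_norm_deriv_right_le
    (f := g) (f' := fun s => b s * g s) (δ := 0) (K := K) (ε := 0) (a := t₀) (b := t)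
    (fun s _ => (hg s).continuousAt.continuousWithinAt)
    (fun s _ => (hg s).hasDerivWithinAt)
    (by simp [h0])
    (fun s hs => by
      have h1 : ‖b s * g s‖ = ‖b s‖ * ‖g s‖ := norm_mul _ _
      have h2 : ‖b s‖ ≤ K := hK s ⟨hs.1, hs.2.le⟩
      calc ‖b s * g s‖ = ‖b s‖ * ‖g s‖ := h1
        _ ≤ K * ‖g s‖ := by
            exact mul_le_mul_of_nonneg_right h2 (norm_nonneg _)
        _ = K * ‖g s‖ + 0 := by ring)
    t ⟨ht, le_rfl⟩
  rw [show gronwallBound (0:ℝ) K 0 (t - t₀) = 0 from by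
      rcases eq_or_ne K 0 with h | h <;> simp [gronwallBound, h]] at this
  exact norm_le_zero_iff.mp this
/-- For the upwind correlation semi-discretization
`d/dt C_{ij} = w_i [C_{i−1,j} − ½ C_{ij}(C_{i−1,i}+C_{i,i−1})]
             + w_j [C_{i,j−1} − ½ C_{ij}(C_{j−1,j}+C_{j,j−1})]`,
a unit diagonal `C_{ii} = 1` at some time `t₀` is preserved for all time. -/
theorem upwind_correlation_unit_diagonal
    (N : ℕ) [NeZero N] (w : ℝ → ZMod N → ℝ) (hw : Continuous w)
    (C : ℝ → Matrix (ZMod N) (ZMod N) ℝ)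
    (hC : ∀ (i j : ZMod N) (t : ℝ),
      HasDerivAt (fun s => C s i j)
        (w t i * (C t (i - 1) j
            - 1 / 2 * C t i j * (C t (i - 1) i + C t i (i - 1)))
          + w t j * (C t i (j - 1)
            - 1 / 2 * C t i j * (C t (j - 1) j + C t j (j - 1)))) t)
    (t₀ : ℝ) (h₀ : ∀ i : ZMod N, C t₀ i i = 1) :
    ∀ (i : ZMod N) (t : ℝ), C t i i = 1 := by
  intro i t
  -- continuity of entries
  have hCent : ∀ a b : ZMod N, Continuous (fun s => C s a b) := fun a b =>
    continuous_iff_continuousAt.2 fun s => (hC a b s).continuousAt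
  have hwi : Continuous (fun s => w s i) := (continuous_apply i).comp hw
  set b : ℝ → ℝ := fun s => -(w s i * (C s (i - 1) i + C s i (i - 1))) with hbdef
  have hb : Continuous b := by
    apply Continuous.neg
    exact hwi.mul ((hCent _ _).add (hCent _ _))
  set g : ℝ → ℝ := fun s => C s i i - 1 with hgdef
  have hg : ∀ s, HasDerivAt g (b s * g s) s := by
    intro s
    have := (hC i i s).sub_const 1
    convert this using 1
    any_goals rfl
    simp only [hbdef, hgdef]
    ring
  have h0 : g t₀ = 0 := by simp [hgdef, h₀ i]
  -- reflected function for backward times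
  have hg2 : ∀ s, HasDerivAt (fun u => g (2 * t₀ - u)) ((-(b (2 * t₀ - s))) * g (2 * t₀ - s)) s := by
    intro s
    have hinner : HasDerivAt (fun u : ℝ => 2 * t₀ - u) (-1) s := by
      simpa using (hasDerivAt_id s).const_sub (2 * t₀)
    have := (hg (2 * t₀ - s)).comp s hinner
    convert this using 1
    any_goals rfl
    ring
  have key : g t = 0 := by
    rcases le_total t₀ t with h | h
    · exact linear_ode_zero_forward b g hb hg t₀ h0 t h
    · have := linear_ode_zero_forward (fun u => -(b (2 * t₀ - u))) (fun u => g (2 * t₀ - u))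
        (hb.comp (by continuity)).neg hg2 t₀ (by show g (2 * t₀ - t₀) = 0; rw [show 2 * t₀ - t₀ = t₀ by ring]; exact h0) (2 * t₀ - t) (by linarith)
      simpa using this
  simpa [hgdef] using sub_eq_zero.mp key
end

section
/- Let N be a positive integer, Δx > 0, v : ZMod N → ℝ, and let P : ℝ → Matrix (ZMod N) (ZMod N) ℝ be differentiable with P_{ii}(t) > 0 for all i and t, satisfying the centered-difference covariance semi-discretization d/dt P_{ij} = (1/(4Δx))(v_{i−1} P_{i−1,j} − v_{i+1} P_{i+1,j}) + (v_i/(4Δx))(P_{i−1,j} − P_{i+1,j}) + (1/(4Δx))(v_{j−1} P_{i,j−1} − v_{j+1} P_{i,j+1}) + (v_j/(4Δx))(P_{i,j−1} − P_{i,j+1}) for all i, j, t. Define C_{ij}(t) := P_{ij}(t) / √(P_{ii}(t) P_{jj}(t)). Then for all i, j, t: d/dt C_{ij} = (1/(2Δx)) √(P_{i−1,i−1}/P_{ii}) ((v_{i−1}+v_i)/2) [C_{i−1,j} − (1/2) C_{ij}(C_{i−1,i}+C_{i,i−1})] − (1/(2Δx)) √(P_{i+1,i+1}/P_{ii}) ((v_{i+1}+v_i)/2)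 [C_{i+1,j} − (1/2) C_{ij}(C_{i+1,i}+C_{i,i+1})] + (1/(2Δx)) √(P_{j−1,j−1}/P_{jj}) ((v_{j−1}+v_j)/2) [C_{i,j−1} − (1/2) C_{ij}(C_{j−1,j}+C_{j,j−1})] − (1/(2Δx)) √(P_{j+1,j+1}/P_{jj}) ((v_{j+1}+v_j)/2) [C_{i,j+1} − (1/2) C_{ij}(C_{j+1,j}+C_{j,j+1})]. -/
set_option maxHeartbeats 4000000 in
/-- The semi-discretization for the correlation implied by the second-order
centered-difference covariance semi-discretization. -/
theorem centered_difference_correlation_semidiscretization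
    (N : ℕ) (hN : 0 < N) (Δx : ℝ) (hΔx : 0 < Δx) (v : ZMod N → ℝ)
    (P : ℝ → Matrix (ZMod N) (ZMod N) ℝ)
    (hpos : ∀ (i : ZMod N) (t : ℝ), 0 < P t i i)
    (hP : ∀ (i j : ZMod N) (t : ℝ),
      HasDerivAt (fun s => P s i j)
        (1 / (4 * Δx) * (v (i - 1) * P t (i - 1) j - v (i + 1) * P t (i + 1) j)
          + v i / (4 * Δx) * (P t (i - 1) j - P t (i + 1) j)
          + 1 / (4 * Δx) * (v (j - 1) * P t i (j - 1) - v (j + 1) * P t i (j + 1))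
          + v j / (4 * Δx) * (P t i (j - 1) - P t i (j + 1))) t) :
    ∀ (i j : ZMod N) (t : ℝ),
      HasDerivAt (fun s => corrEntry (P s) i j)
        (1 / (2 * Δx) * Real.sqrt (P t (i - 1) (i - 1) / P t i i)
            * ((v (i - 1) + v i) / 2)
            * (corrEntry (P t) (i - 1) j
              - 1 / 2 * corrEntry (P t) i j
                * (corrEntry (P t) (i - 1) i + corrEntry (P t) i (i - 1)))
          - 1 / (2 * Δx) * Real.sqrt (P t (i + 1) (i + 1) / P t i i)
            * ((v (i + 1) + v i) / 2)
            * (corrEntry (P t) (i + 1) j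
              - 1 / 2 * corrEntry (P t) i j
                * (corrEntry (P t) (i + 1) i + corrEntry (P t) i (i + 1)))
          + 1 / (2 * Δx) * Real.sqrt (P t (j - 1) (j - 1) / P t j j)
            * ((v (j - 1) + v j) / 2)
            * (corrEntry (P t) i (j - 1)
              - 1 / 2 * corrEntry (P t) i j
                * (corrEntry (P t) (j - 1) j + corrEntry (P t) j (j - 1)))
          - 1 / (2 * Δx) * Real.sqrt (P t (j + 1) (j + 1) / P t j j)
            * ((v (j + 1) + v j) / 2)
            * (corrEntry (P t) i (j + 1)
              - 1 / 2 * corrEntry (P t) i j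
                * (corrEntry (P t) (j + 1) j + corrEntry (P t) j (j + 1)))) t := by
  intro i j t
  have ha := hpos i t
  have hb := hpos j t
  have hA := hP i i t
  have hB := hP j j t
  have hp := hP i j t
  have hab : (0:ℝ) < P t i i * P t j j := mul_pos ha hb
  have hg := hA.mul hB
  have hsq := hg.sqrt (ne_of_gt hab)
  have hne : Real.sqrt (P t i i * P t j j) ≠ 0 :=
    ne_of_gt (Real.sqrt_pos.mpr hab)
  have hdiv := hp.div hsq hne
  simp only [corrEntry]
  refine hdiv.congr_deriv (Eq.symm ?_)
  have hm : ∀ a b : ZMod N, Real.sqrt (P t a a * P t b b)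
      = Real.sqrt (P t a a) * Real.sqrt (P t b b) :=
    fun a b => Real.sqrt_mul (hpos a t).le _
  have hd : ∀ a b : ZMod N, Real.sqrt (P t a a / P t b b)
      = Real.sqrt (P t a a) / Real.sqrt (P t b b) :=
    fun a b => Real.sqrt_div (hpos a t).le _
  simp only [Pi.mul_apply, hm, hd]
  set si := Real.sqrt (P t i i) with hsi
  set sj := Real.sqrt (P t j j) with hsj
  set si1 := Real.sqrt (P t (i - 1) (i - 1)) with hsi1
  set si2 := Real.sqrt (P t (i + 1) (i + 1)) with hsi2
  set sj1 := Real.sqrt (P t (j - 1) (j - 1)) with hsj1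
  set sj2 := Real.sqrt (P t (j + 1) (j + 1)) with hsj2
  have hsip : 0 < si := Real.sqrt_pos.mpr ha
  have hsjp : 0 < sj := Real.sqrt_pos.mpr hb
  have hsi1p : 0 < si1 := Real.sqrt_pos.mpr (hpos (i - 1) t)
  have hsi2p : 0 < si2 := Real.sqrt_pos.mpr (hpos (i + 1) t)
  have hsj1p : 0 < sj1 := Real.sqrt_pos.mpr (hpos (j - 1) t)
  have hsj2p : 0 < sj2 := Real.sqrt_pos.mpr (hpos (j + 1) t)
  have hqi : si ^ 2 = P t i i := Real.sq_sqrt ha.le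
  have hqj : sj ^ 2 = P t j j := Real.sq_sqrt hb.le
  rw [← hqi, ← hqj]
  field_simp
  ring
end
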